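/- Let h be an entire function of genus 0 or 1 whose zeros all lie in the vertical strip |Re s − a| < b (for some real a and b > 0), real on the real line, satisfying h(2a − s) = ε h(s) with ε = ±1 (so zeros come in pairs ρ, 2a − conj ρ). Then for every α ≥ b and every s with Re s > a, |h(s − α)| < |h(s + α)|. -/

import Mathlib

open Complex Filter

private lemma abs2 (w : ℂ) : (‖w‖)^2 = w.re^2 + w.im^2 := by
  rw [Complex.sq_norm, Complex.normSq_apply]; ring

private lemma core_lt (z u : ℂ) (α : ℝ) (hα : 0 < α) (hσ : 0 < u.re) (hz : |z.re| < α) :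
    ‖(z - (u - α)) * (z - (-(starRingEnd ℂ) u + α))‖ <
    ‖(z - (u + α)) * (z - (-(starRingEnd ℂ) u - α))‖ := by
  obtain ⟨h1, h2⟩ := abs_lt.mp hz
  have hx2 : z.re ^ 2 < α ^ 2 := by nlinarith
  apply lt_of_pow_lt_pow_left₀ 2 (norm_nonneg _)
  rw [norm_mul, norm_mul, mul_pow, mul_pow, abs2, abs2, abs2, abs2]
  simp only [Complex.sub_re, Complex.sub_im, Complex.add_re, Complex.add_im, Complex.neg_re,
    Complex.neg_im, Complex.conj_re, Complex.conj_im, Complex.ofReal_re, Complex.ofReal_im,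
    sub_zero, add_zero, neg_neg, neg_zero]
  nlinarith [sq_nonneg (z.im - u.im), mul_pos hα hσ, sq_nonneg u.re,
    mul_pos (mul_pos hα hσ) (add_pos_of_pos_of_nonneg (sub_pos.mpr hx2)
      (add_nonneg (sq_nonneg u.re) (sq_nonneg (z.im - u.im))))]

private lemma head_le (u : ℂ) (α : ℝ) (hα : 0 ≤ α) (hσ : 0 ≤ u.re) :
    ‖u - α‖ ≤ ‖u + α‖ := by
  apply le_of_pow_le_pow_left₀ two_ne_zero (norm_nonneg _)
  rw [abs2, abs2]
  simp only [Complex.sub_re, Complex.sub_im, Complex.add_re, Complex.add_im,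
    Complex.ofReal_re, Complex.ofReal_im, sub_zero, add_zero]
  nlinarith [mul_nonneg hα hσ]

private lemma ratio_step (a₁ a₂ b₁ b₂ c e₁ e₂ f₁ f₂ : ℝ) (hc : 0 < c)
    (hab : a₁ * a₂ < b₁ * b₂) (he : e₁ + e₂ = f₁ + f₂) :
    a₁ / c * Real.exp e₁ * (a₂ / c * Real.exp e₂) <
      b₁ / c * Real.exp f₁ * (b₂ / c * Real.exp f₂) := by
  have h1 : a₁ / c * Real.exp e₁ * (a₂ / c * Real.exp e₂)
      = a₁ * a₂ * Real.exp (e₁ + e₂) / (c * c) := by rw [Real.exp_add]; ring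
  have h2 : b₁ / c * Real.exp f₁ * (b₂ / c * Real.exp f₂)
      = b₁ * b₂ * Real.exp (e₁ + e₂) / (c * c) := by rw [he, Real.exp_add]; ring
  rw [h1, h2]
  exact div_lt_div_of_pos_right (mul_lt_mul_of_pos_right hab (Real.exp_pos _)) (mul_pos hc hc)

private lemma head_step (x y e₁ e₂ f₁ f₂ : ℝ) (m : ℕ) (hx : 0 ≤ x) (hxy : x ≤ y)
    (he : e₁ + e₂ = f₁ + f₂) :
    x ^ m * Real.exp e₁ * (x ^ m * Real.exp e₂) ≤ y ^ m * Real.exp f₁ * (y ^ m * Real.exp f₂) := by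
  have h1 : x ^ m * Real.exp e₁ * (x ^ m * Real.exp e₂)
      = x ^ m * x ^ m * Real.exp (e₁ + e₂) := by rw [Real.exp_add]; ring
  have h2 : y ^ m * Real.exp f₁ * (y ^ m * Real.exp f₂)
      = y ^ m * y ^ m * Real.exp (e₁ + e₂) := by rw [he, Real.exp_add]; ring
  rw [h1, h2]
  have hy : 0 ≤ y := hx.trans hxy
  exact mul_le_mul_of_nonneg_right
    (mul_le_mul (pow_le_pow_left₀ hx hxy m) (pow_le_pow_left₀ hx hxy m)
      (pow_nonneg hx m) (pow_nonneg hy m)) (Real.exp_pos _).le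

private lemma abs_m1 (u : ℂ) (α : ℝ) :
    ‖-(starRingEnd ℂ) u + (α : ℂ)‖ = ‖u - α‖ := by
  have e : -(starRingEnd ℂ) u + (α : ℂ) = -((starRingEnd ℂ) (u - α)) := by
    rw [map_sub, Complex.conj_ofReal]; ring
  rw [e, norm_neg, Complex.norm_conj]

private lemma abs_m2 (u : ℂ) (α : ℝ) :
    ‖-(starRingEnd ℂ) u - (α : ℂ)‖ = ‖u + α‖ := by
  have e : -(starRingEnd ℂ) u - (α : ℂ) = -((starRingEnd ℂ) (u + α)) := by
    rw [map_add, Complex.conj_ofReal]; ring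
  rw [e, norm_neg, Complex.norm_conj]

private lemma schwarz (h : ℂ → ℂ) (hdiff : Differentiable ℂ h)
    (hreal : ∀ x : ℝ, (h (x : ℂ)).im = 0) :
    ∀ z : ℂ, h ((starRingEnd ℂ) z) = (starRingEnd ℂ) (h z) := by
  set g : ℂ → ℂ := fun w => (starRingEnd ℂ) (h ((starRingEnd ℂ) w)) with hg_def
  have hg : Differentiable ℂ g := by
    intro z
    have hd : HasDerivAt h (deriv h ((starRingEnd ℂ) z)) ((starRingEnd ℂ) z) :=
      (hdiff _).hasDerivAt
    have hmap : Tendsto (starRingEnd ℂ) (nhdsWithin z {z}ᶜ)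
        (nhdsWithin ((starRingEnd ℂ) z) {(starRingEnd ℂ) z}ᶜ) := by
      rw [tendsto_nhdsWithin_iff]
      refine ⟨(Complex.continuous_conj.tendsto z).mono_left nhdsWithin_le_nhds, ?_⟩
      filter_upwards [self_mem_nhdsWithin] with w hw
      simp only [Set.mem_compl_iff, Set.mem_singleton_iff] at hw ⊢
      exact fun hc => hw (by simpa using congrArg (starRingEnd ℂ) hc)
    rw [hasDerivAt_iff_tendsto_slope] at hd
    have h2 := (Complex.continuous_conj.tendsto _).comp (hd.comp hmap)
    have h3 : HasDerivAt g ((starRingEnd ℂ) (deriv h ((starRingEnd ℂ) z))) z := by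
      rw [hasDerivAt_iff_tendsto_slope]
      refine h2.congr fun w => ?_
      simp only [Function.comp_apply, slope_def_field, hg_def]
      rw [map_div₀]; simp [map_sub]
    exact h3.differentiableAt
  have heq : Set.EqOn h g Set.univ := by
    apply AnalyticOnNhd.eqOn_of_preconnected_of_frequently_eq
      ((Complex.analyticOnNhd_univ_iff_differentiable).2 hdiff)
      ((Complex.analyticOnNhd_univ_iff_differentiable).2 hg)
      isPreconnected_univ (Set.mem_univ (0 : ℂ))
    have hseq : Tendsto (fun n : ℕ => ((1/(n+1) : ℝ) : ℂ)) atTop (nhdsWithin 0 {(0:ℂ)}ᶜ) := by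
      rw [tendsto_nhdsWithin_iff]
      constructor
      · have h0 := tendsto_one_div_add_atTop_nhds_zero_nat (𝕜 := ℝ)
        have h1 := (Complex.continuous_ofReal.tendsto (0:ℝ)).comp h0
        rw [Complex.ofReal_zero] at h1
        exact h1
      · filter_upwards with n
        simp only [Set.mem_compl_iff, Set.mem_singleton_iff]
        have hne : (1/((n:ℝ)+1)) ≠ 0 := by positivity
        exact Complex.ofReal_ne_zero.mpr hne
    apply hseq.frequently
    apply Frequently.of_forall
    intro n
    have hre := hreal (1/(n+1))
    have hconjeq : (starRingEnd ℂ) (h ((1/(n+1) : ℝ) : ℂ)) = h ((1/(n+1) : ℝ) : ℂ) :=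
      Complex.conj_eq_iff_im.mpr hre
    simp only [hg_def]
    rw [Complex.conj_ofReal, hconjeq]
  intro z
  have := heq (Set.mem_univ ((starRingEnd ℂ) z))
  simp only [hg_def] at this
  rw [this, Complex.conj_conj]

private noncomputable def Kf (ρ : ℕ → ℂ) (a : ℝ) (v : ℂ) (n : ℕ) : ℂ :=
  (1 - v / (ρ n - a)) * Complex.exp (v / (ρ n - a))

private noncomputable def Pf (m : ℕ) (A B : ℂ) (ρ : ℕ → ℂ) (a : ℝ) (v : ℂ) (N : ℕ) : ℂ :=
  v ^ m * Complex.exp (A + B * v) * ∏ n ∈ Finset.range N, Kf ρ a v n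

private lemma expand (m : ℕ) (A B : ℂ) (ρ : ℕ → ℂ) (a : ℝ) (v₁ v₂ : ℂ) (M : ℕ) :
    ‖Pf m A B ρ a v₁ M‖ * ‖Pf m A B ρ a v₂ M‖
    = (‖v₁ ^ m * Complex.exp (A + B * v₁)‖ *
        ‖v₂ ^ m * Complex.exp (A + B * v₂)‖)
      * ∏ n ∈ Finset.range M, (‖Kf ρ a v₁ n‖ * ‖Kf ρ a v₂ n‖) := by
  unfold Pf
  simp only [norm_mul, norm_prod, Finset.prod_mul_distrib]
  ring

theorem stmt_15 (a b : ℝ) (hb : 0 < b) (h : ℂ → ℂ) (ε : ℂ)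
    (hε : ε = 1 ∨ ε = -1)
    (hdiff : Differentiable ℂ h)
    (hzeros : ∀ s : ℂ, h s = 0 → |s.re - a| < b)
    (hreal : ∀ x : ℝ, (h (x : ℂ)).im = 0)
    (hfe : ∀ s : ℂ, h (2 * a - s) = ε * h s)
    (m : ℕ) (A B : ℂ) (ρ : ℕ → ℂ)
    (hρne : ∀ n, ρ n ≠ (a : ℂ))
    (hρzero : ∀ n, h (ρ n) = 0)
    (hsum : Summable fun n => 1 / ‖ρ n - a‖ ^ 2)
    (hfact : ∀ s : ℂ, Tendsto
      (fun N => (s - a) ^ m * Complex.exp (A + B * (s - a)) *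
        ∏ n ∈ Finset.range N,
          ((1 - (s - a) / (ρ n - a)) * Complex.exp ((s - a) / (ρ n - a))))
      atTop (nhds (h s)))
    (α : ℝ) (hα : b ≤ α) :
    ∀ s : ℂ, a < s.re →
      ‖h (s - α)‖ < ‖h (s + α)‖ := by
  have hα' : 0 < α := lt_of_lt_of_le hb hα
  have hconj := schwarz h hdiff hreal
  have hεabs : ‖ε‖ = 1 := by rcases hε with rfl | rfl <;> simp
  have hP : ∀ s' : ℂ, Tendsto (fun N => Pf m A B ρ a (s' - a) N) atTop (nhds (h s')) :=
    fun s' => hfact s'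
  have hz0 : ∀ n, ρ n - (a : ℂ) ≠ 0 := fun n => sub_ne_zero.mpr (hρne n)
  have hzre : ∀ n, |(ρ n - (a : ℂ)).re| < α := by
    intro n
    have h1 := hzeros (ρ n) (hρzero n)
    simp only [Complex.sub_re, Complex.ofReal_re]
    exact lt_of_lt_of_le h1 hα
  intro s hs
  set u : ℂ := s - (a : ℂ) with hu
  have hσ : 0 < u.re := by
    rw [hu]; simp only [Complex.sub_re, Complex.ofReal_re]; linarith
  set wc : ℂ := 2 * (a : ℂ) - (starRingEnd ℂ) s with hwc
  -- the four tendsto statements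
  have e1 : s - (α : ℂ) - (a : ℂ) = u - α := by rw [hu]; ring
  have e2 : wc + (α : ℂ) - (a : ℂ) = -(starRingEnd ℂ) u + α := by
    rw [hwc, hu, map_sub, Complex.conj_ofReal]; ring
  have e3 : s + (α : ℂ) - (a : ℂ) = u + α := by rw [hu]; ring
  have e4 : wc - (α : ℂ) - (a : ℂ) = -(starRingEnd ℂ) u - α := by
    rw [hwc, hu, map_sub, Complex.conj_ofReal]; ring
  have T1 := hP (s - (α : ℂ)); rw [e1] at T1
  have T2 := hP (wc + (α : ℂ)); rw [e2] at T2
  have T3 := hP (s + (α : ℂ)); rw [e3] at T3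
  have T4 := hP (wc - (α : ℂ)); rw [e4] at T4
  -- symmetry of abs values
  have habs1 : ‖h (wc + (α : ℂ))‖ = ‖h (s - α)‖ := by
    have hq := hfe ((starRingEnd ℂ) s - (α : ℂ))
    have harg : 2 * (a : ℂ) - ((starRingEnd ℂ) s - (α : ℂ)) = wc + α := by rw [hwc]; ring
    have harg2 : (starRingEnd ℂ) s - (α : ℂ) = (starRingEnd ℂ) (s - α) := by
      rw [map_sub, Complex.conj_ofReal]
    rw [harg, harg2, hconj] at hq
    rw [hq, norm_mul, hεabs, one_mul, Complex.norm_conj]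
  have habs2 : ‖h (wc - (α : ℂ))‖ = ‖h (s + α)‖ := by
    have hq := hfe ((starRingEnd ℂ) s + (α : ℂ))
    have harg : 2 * (a : ℂ) - ((starRingEnd ℂ) s + (α : ℂ)) = wc - α := by rw [hwc]; ring
    have harg2 : (starRingEnd ℂ) s + (α : ℂ) = (starRingEnd ℂ) (s + α) := by
      rw [map_add, Complex.conj_ofReal]
    rw [harg, harg2, hconj] at hq
    rw [hq, norm_mul, hεabs, one_mul, Complex.norm_conj]
  have A1 := (continuous_norm.tendsto _).comp T1
  have A2 := (continuous_norm.tendsto _).comp T2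
  have A3 := (continuous_norm.tendsto _).comp T3
  have A4 := (continuous_norm.tendsto _).comp T4
  rw [habs1] at A2
  rw [habs2] at A4
  -- per-factor strict inequality
  have hfac : ∀ n, ‖Kf ρ a (u - α) n‖ *
        ‖Kf ρ a (-(starRingEnd ℂ) u + α) n‖
      < ‖Kf ρ a (u + α) n‖ *
        ‖Kf ρ a (-(starRingEnd ℂ) u - α) n‖ := by
    intro n
    have hz := hz0 n
    have hzpos : 0 < ‖ρ n - (a : ℂ)‖ := norm_pos_iff.mpr hz
    have habsK : ∀ v : ℂ, ‖Kf ρ a v n‖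
        = ‖(ρ n - (a : ℂ)) - v‖ / ‖ρ n - (a : ℂ)‖ *
          Real.exp ((v / (ρ n - (a : ℂ))).re) := by
      intro v
      rw [Kf, norm_mul, one_sub_div hz, norm_div, Complex.norm_exp]
    rw [habsK, habsK, habsK, habsK]
    have hcore := core_lt (ρ n - (a : ℂ)) u α hα' hσ (hzre n)
    rw [norm_mul, norm_mul] at hcore
    apply ratio_step _ _ _ _ _ _ _ _ _ hzpos hcore
    rw [← Complex.add_re, ← Complex.add_re, ← add_div, ← add_div]
    rw [show u - (α : ℂ) + (-(starRingEnd ℂ) u + α)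
        = u + (α : ℂ) + (-(starRingEnd ℂ) u - α) from by ring]
  -- head comparison
  have habs_eq1 := abs_m1 u α
  have habs_eq2 := abs_m2 u α
  have hhead : ‖(u - (α : ℂ)) ^ m * Complex.exp (A + B * (u - α))‖ *
        ‖(-(starRingEnd ℂ) u + (α : ℂ)) ^ m *
          Complex.exp (A + B * (-(starRingEnd ℂ) u + α))‖
      ≤ ‖(u + (α : ℂ)) ^ m * Complex.exp (A + B * (u + α))‖ *
        ‖(-(starRingEnd ℂ) u - (α : ℂ)) ^ m *
          Complex.exp (A + B * (-(starRingEnd ℂ) u - α))‖ := by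
    rw [norm_mul, norm_mul, norm_mul, norm_mul, norm_pow, norm_pow, norm_pow, norm_pow,
      Complex.norm_exp, Complex.norm_exp, Complex.norm_exp, Complex.norm_exp,
      habs_eq1, habs_eq2]
    apply head_step _ _ _ _ _ _ m (norm_nonneg _) (head_le u α hα'.le hσ.le)
    rw [← Complex.add_re, ← Complex.add_re]
    rw [show A + B * (u - (α : ℂ)) + (A + B * (-(starRingEnd ℂ) u + α))
        = A + B * (u + (α : ℂ)) + (A + B * (-(starRingEnd ℂ) u - α)) from by ring]
  -- key inequality for partial products
  have key : ∀ M : ℕ,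
      ‖Pf m A B ρ a (u - α) (M + 1)‖ *
        ‖Pf m A B ρ a (-(starRingEnd ℂ) u + α) (M + 1)‖ *
        (‖Kf ρ a (u + α) 0‖ * ‖Kf ρ a (-(starRingEnd ℂ) u - α) 0‖)
      ≤ ‖Pf m A B ρ a (u + α) (M + 1)‖ *
        ‖Pf m A B ρ a (-(starRingEnd ℂ) u - α) (M + 1)‖ *
        (‖Kf ρ a (u - α) 0‖ * ‖Kf ρ a (-(starRingEnd ℂ) u + α) 0‖) := by
    intro M
    rw [expand, expand, Finset.prod_range_succ', Finset.prod_range_succ']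
    have hprod : (∏ n ∈ Finset.range M,
          (‖Kf ρ a (u - α) (n + 1)‖ *
            ‖Kf ρ a (-(starRingEnd ℂ) u + α) (n + 1)‖))
        ≤ ∏ n ∈ Finset.range M,
          (‖Kf ρ a (u + α) (n + 1)‖ *
            ‖Kf ρ a (-(starRingEnd ℂ) u - α) (n + 1)‖) :=
      Finset.prod_le_prod
        (fun i _ => mul_nonneg (norm_nonneg _) (norm_nonneg _))
        (fun i _ => (hfac (i + 1)).le)
    have h5 : ‖(u - (α:ℂ)) ^ m * Complex.exp (A + B * (u - α))‖ *
          ‖(-(starRingEnd ℂ) u + (α:ℂ)) ^ m *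
            Complex.exp (A + B * (-(starRingEnd ℂ) u + α))‖ *
          (∏ n ∈ Finset.range M,
            (‖Kf ρ a (u - α) (n + 1)‖ *
              ‖Kf ρ a (-(starRingEnd ℂ) u + α) (n + 1)‖))
        ≤ ‖(u + (α:ℂ)) ^ m * Complex.exp (A + B * (u + α))‖ *
          ‖(-(starRingEnd ℂ) u - (α:ℂ)) ^ m *
            Complex.exp (A + B * (-(starRingEnd ℂ) u - α))‖ *
          (∏ n ∈ Finset.range M,
            (‖Kf ρ a (u + α) (n + 1)‖ *
              ‖Kf ρ a (-(starRingEnd ℂ) u - α) (n + 1)‖)) :=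
      mul_le_mul hhead hprod
        (Finset.prod_nonneg fun i _ => mul_nonneg (norm_nonneg _) (norm_nonneg _))
        (mul_nonneg (norm_nonneg _) (norm_nonneg _))
    have h6 := mul_le_mul_of_nonneg_right h5
      (mul_nonneg
        (mul_nonneg (norm_nonneg (Kf ρ a (u - α) 0))
          (norm_nonneg (Kf ρ a (-(starRingEnd ℂ) u + α) 0)))
        (mul_nonneg (norm_nonneg (Kf ρ a (u + α) 0))
          (norm_nonneg (Kf ρ a (-(starRingEnd ℂ) u - α) 0))))
    nlinarith [h6]
  -- assemble limits
  have TL := (A1.mul A2).mul_const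
    (‖Kf ρ a (u + α) 0‖ * ‖Kf ρ a (-(starRingEnd ℂ) u - α) 0‖)
  have TR := (A3.mul A4).mul_const
    (‖Kf ρ a (u - α) 0‖ * ‖Kf ρ a (-(starRingEnd ℂ) u + α) 0‖)
  have hev : ∀ᶠ N in atTop,
      ‖Pf m A B ρ a (u - α) N‖ *
        ‖Pf m A B ρ a (-(starRingEnd ℂ) u + α) N‖ *
        (‖Kf ρ a (u + α) 0‖ * ‖Kf ρ a (-(starRingEnd ℂ) u - α) 0‖)
      ≤ ‖Pf m A B ρ a (u + α) N‖ *
        ‖Pf m A B ρ a (-(starRingEnd ℂ) u - α) N‖ *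
        (‖Kf ρ a (u - α) 0‖ * ‖Kf ρ a (-(starRingEnd ℂ) u + α) 0‖) := by
    rw [eventually_atTop]
    refine ⟨1, fun N hN => ?_⟩
    obtain ⟨M, rfl⟩ := Nat.exists_eq_succ_of_ne_zero (by omega : N ≠ 0)
    exact key M
  have main := le_of_tendsto_of_tendsto TL TR hev
  -- positivity facts
  have hKne : ∀ v : ℂ, v ≠ ρ 0 - (a : ℂ) → Kf ρ a v 0 ≠ 0 := by
    intro v hv
    rw [Kf]
    apply mul_ne_zero _ (Complex.exp_ne_zero _)
    intro hc
    apply hv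
    have h1 : (1 : ℂ) = v / (ρ 0 - (a : ℂ)) := sub_eq_zero.mp hc
    exact (div_eq_one_iff_eq (hz0 0)).mp h1.symm
  have hne1 : (u + (α : ℂ)) ≠ ρ 0 - (a : ℂ) := by
    intro hc
    have h' := congrArg Complex.re hc
    simp only [Complex.add_re, Complex.ofReal_re] at h'
    have h2 := (abs_lt.mp (hzre 0)).2
    linarith
  have hne2 : (-(starRingEnd ℂ) u - (α : ℂ)) ≠ ρ 0 - (a : ℂ) := by
    intro hc
    have h' := congrArg Complex.re hc
    simp only [Complex.sub_re, Complex.neg_re, Complex.conj_re, Complex.ofReal_re] at h'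
    have h2 := (abs_lt.mp (hzre 0)).1
    simp only [Complex.sub_re, Complex.ofReal_re] at h2
    linarith
  have hR0 : 0 < ‖Kf ρ a (u + α) 0‖ *
      ‖Kf ρ a (-(starRingEnd ℂ) u - α) 0‖ :=
    mul_pos (norm_pos_iff.mpr (hKne _ hne1)) (norm_pos_iff.mpr (hKne _ hne2))
  have hY : 0 < ‖h (s + α)‖ := by
    rw [norm_pos_iff]
    intro h0
    have h1 := hzeros _ h0
    simp only [Complex.add_re, Complex.ofReal_re] at h1
    have h2 := (abs_lt.mp h1).2
    linarith
  have h5 : ‖h (s - α)‖ * ‖h (s - α)‖ *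
      (‖Kf ρ a (u + α) 0‖ * ‖Kf ρ a (-(starRingEnd ℂ) u - α) 0‖)
      < ‖h (s + α)‖ * ‖h (s + α)‖ *
      (‖Kf ρ a (u + α) 0‖ * ‖Kf ρ a (-(starRingEnd ℂ) u - α) 0‖) :=
    lt_of_le_of_lt main (mul_lt_mul_of_pos_left (hfac 0) (mul_pos hY hY))
  have h6 := (mul_lt_mul_iff_of_pos_right hR0).mp h5
  nlinarith [norm_nonneg (h (s - (α:ℂ))), norm_nonneg (h (s + (α:ℂ))), h6]
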